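/- Writing A(s; t_1,...,t_r) = sI - B, if t_1,...,t_r are positive reals then the matrix D B D^{-1} is real symmetric, where D is the diagonal matrix with entries D_{l,l} = (t_1^{l_1} t_2^{l_2} ⋯ t_r^{l_r})^{1/2}; consequently all eigenvalues of B are real. -/

import Mathlib

/-- The matrix `A(s; t_1,...,t_r)` of the paper: rows and columns are indexed by
binary sequences `l : Fin r → Bool`.  Diagonal entries are `s`; if `l'` differs
from `l` exactly at position `i`, the entry is `-(-1)^{l_{i+1}+⋯+l_r} t_i` when
`l_i = 0` and `(-1)^{l_i+⋯+l_r} (= -(-1)^{l_{i+1}+⋯+l_r})` when `l_i = 1`;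
all other entries vanish. -/
def Amat (r : ℕ) {R : Type*} [CommRing R] (s : R) (t : Fin r → R) :
    Matrix (Fin r → Bool) (Fin r → Bool) R :=
  fun l l' =>
    (if l' = l then s else 0) +
      ∑ i : Fin r,
        if l' = Function.update l i (!(l i)) then
          -(-1 : R) ^ ((Finset.univ.filter fun j => i < j ∧ l j = true).card) *
            (if l i then 1 else t i)
        else 0


/-- The matrix `B` with zero diagonal satisfying `A(s;t) = s·I - B`. -/
def Bmat (r : ℕ) {R : Type*} [CommRing R] (t : Fin r → R) :
    Matrix (Fin r → Bool) (Fin r → Bool) R :=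
  -(Amat r 0 t)

open Matrix Polynomial Finset

lemma my_eval_charpoly {n : Type*} [DecidableEq n] [Fintype n] {R : Type*} [CommRing R]
    (M : Matrix n n R) (z : R) :
    M.charpoly.eval z = (Matrix.scalar n z - M).det := by
  rw [Matrix.charpoly, _root_.eval_det, matPolyEquiv_charmatrix]
  simp

lemma herm_root_real {n : Type*} [DecidableEq n] [Fintype n] (M : Matrix n n ℂ)
    (hM : M.IsHermitian) {z : ℂ} (hz : (Matrix.scalar n z - M).det = 0) : z.im = 0 := by
  obtain ⟨v, hv, hMv⟩ := (Matrix.exists_mulVec_eq_zero_iff).2 hz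
  have hSv : M *ᵥ v = z • v := by
    rw [Matrix.sub_mulVec] at hMv
    have h2 : (Matrix.scalar n z) *ᵥ v = z • v := by
      ext i; simp [Matrix.scalar, Matrix.mulVec_diagonal]
    rw [h2] at hMv
    linear_combination (norm := module) -hMv
  have h1 : star v ⬝ᵥ (M *ᵥ v) = z * (star v ⬝ᵥ v) := by
    rw [hSv, dotProduct_smul, smul_eq_mul]
  have h2 : star v ⬝ᵥ (M *ᵥ v) = (starRingEnd ℂ) z * (star v ⬝ᵥ v) := by
    rw [Matrix.dotProduct_mulVec]
    have hvm : Matrix.vecMul (star v) M = star (M *ᵥ v) := by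
      rw [Matrix.star_mulVec, hM.eq]
    rw [hvm, hSv, star_smul, smul_dotProduct, smul_eq_mul]
    rfl
  have hc : star v ⬝ᵥ v ≠ 0 := fun h => hv (by
    open scoped ComplexOrder in exact dotProduct_star_self_eq_zero.1 h)
  have : z = (starRingEnd ℂ) z := mul_right_cancel₀ hc (h1.symm.trans h2)
  exact Complex.conj_eq_iff_im.mp this.symm

lemma Bmat_apply (r : ℕ) (t : Fin r → ℝ) (l l' : Fin r → Bool) :
    Bmat r t l l' = ∑ i : Fin r, if l' = Function.update l i (!(l i)) then
      (-1 : ℝ) ^ ((Finset.univ.filter fun j => i < j ∧ l j = true).card) *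
        (if l i then 1 else t i) else 0 := by
  simp only [Bmat, Amat, Matrix.neg_apply, ite_self, zero_add, neg_add_rev,
    ← Finset.sum_neg_distrib]
  refine Finset.sum_congr rfl fun i _ => ?_
  split <;> ring

lemma upd_symm {r : ℕ} {l l' : Fin r → Bool} {i : Fin r}
    (h : l' = Function.update l i (!(l i))) : l = Function.update l' i (!(l' i)) := by
  subst h
  simp [Function.update_idem]

lemma sign_eq {r : ℕ} {l l' : Fin r → Bool} {i : Fin r}
    (h : l' = Function.update l i (!(l i))) :
    (Finset.univ.filter fun j => i < j ∧ l' j = true).card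
      = (Finset.univ.filter fun j => i < j ∧ l j = true).card := by
  congr 1
  refine Finset.filter_congr fun j _ => ?_
  by_cases hij : i < j
  · have hne : j ≠ i := fun e => by subst e; exact lt_irrefl j hij
    rw [h, Function.update_of_ne hne]
  · simp [hij]

lemma sqrt_prod_update {r : ℕ} (t : Fin r → ℝ) (ht : ∀ i, 0 < t i)
    (l : Fin r → Bool) (i : Fin r) (h : l i = false) :
    Real.sqrt (∏ j, if Function.update l i true j then t j else 1)
      = Real.sqrt (t i) * Real.sqrt (∏ j, if l j then t j else 1) := by
  have key := Finset.prod_update_of_mem (Finset.mem_univ i)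
    (fun j => if l j then t j else 1) (t i)
  have h1 : (∏ j, if Function.update l i true j then t j else 1)
      = t i * ∏ j ∈ Finset.univ \ {i}, (if l j then t j else 1) := by
    rw [← key]
    refine Finset.prod_congr rfl fun j _ => ?_
    by_cases hj : j = i
    · subst hj; simp
    · simp [Function.update_of_ne hj]
  have h2 : (∏ j, if l j then t j else 1)
      = ∏ j ∈ Finset.univ \ {i}, (if l j then t j else 1) := by
    rw [Finset.prod_eq_mul_prod_sdiff_singleton_of_mem (Finset.mem_univ i), h]
    simp
  rw [h1, h2, Real.sqrt_mul (ht i).le]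

theorem Bmat_conj_symm_and_eigenvalues_real (r : ℕ) (hr : 1 < r)
    (t : Fin r → ℝ) (ht : ∀ i, 0 < t i) :
    (Matrix.diagonal (fun l : Fin r → Bool => Real.sqrt (∏ i, if l i then t i else 1)) *
        Bmat r t *
        Matrix.diagonal (fun l : Fin r → Bool =>
          (Real.sqrt (∏ i, if l i then t i else 1))⁻¹)).IsSymm ∧
    ∀ z : ℂ, (((Bmat r t).map (fun x : ℝ => (x : ℂ))).charpoly.IsRoot z → z.im = 0) := by
  set d : (Fin r → Bool) → ℝ := fun l => Real.sqrt (∏ i, if l i then t i else 1) with hd_def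
  have hd : ∀ l, 0 < d l := fun l => Real.sqrt_pos.2
    (Finset.prod_pos fun i _ => by split <;> [exact ht i; exact one_pos])
  have hsym : (Matrix.diagonal d * Bmat r t * Matrix.diagonal fun l => (d l)⁻¹).IsSymm := by
    rw [Matrix.IsSymm]
    ext l l'
    simp only [Matrix.transpose_apply, Matrix.mul_diagonal, Matrix.diagonal_mul]
    rw [Bmat_apply, Bmat_apply, Finset.mul_sum, Finset.mul_sum, Finset.sum_mul, Finset.sum_mul]
    refine Finset.sum_congr rfl fun i _ => ?_
    by_cases hP : l' = Function.update l i (!(l i))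
    · have hP' : l = Function.update l' i (!(l' i)) := upd_symm hP
      rw [if_pos hP, if_pos hP', sign_eq hP]
      have hs : Real.sqrt (t i) * Real.sqrt (t i) = t i := Real.mul_self_sqrt (ht i).le
      have hb : Real.sqrt (t i) ≠ 0 := (Real.sqrt_pos.2 (ht i)).ne'
      cases hli : l i with
      | false =>
          have hli' : l' i = true := by rw [hP]; simp [hli]
          rw [hli] at hP; simp only [Bool.not_false] at hP
          have hdl' : d l' = Real.sqrt (t i) * d l := by
            rw [hP]; exact sqrt_prod_update t ht l i hli
          simp only [hli', if_true, Bool.false_eq_true, if_false]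
          have hX : d l ≠ 0 := (hd l).ne'
          rw [hdl', ← hs]
          field_simp
          ring_nf
          rw [Real.sqrt_sq (Real.sqrt_nonneg _)]
      | true =>
          have hli' : l' i = false := by rw [hP]; simp [hli]
          rw [hli'] at hP'; simp only [Bool.not_false] at hP'
          have hdl : d l = Real.sqrt (t i) * d l' := by
            rw [hP']; exact sqrt_prod_update t ht l' i hli'
          simp only [hli', if_true, Bool.false_eq_true, if_false]
          have hX : d l' ≠ 0 := (hd l').ne'
          rw [hdl, ← hs]
          field_simp
          ring_nf
          rw [Real.sqrt_sq (Real.sqrt_nonneg _)]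
    · have hP' : ¬(l = Function.update l' i (!(l' i))) := fun h => hP (upd_symm h)
      rw [if_neg hP, if_neg hP']
      ring
  refine ⟨hsym, fun z hz => ?_⟩
  set Bc := (Bmat r t).map (fun x : ℝ => (x : ℂ)) with hBc
  have hdet : (Matrix.scalar (Fin r → Bool) z - Bc).det = 0 := by
    rw [← my_eval_charpoly]; exact hz
  set S : Matrix (Fin r → Bool) (Fin r → Bool) ℝ :=
    Matrix.diagonal d * Bmat r t * Matrix.diagonal fun l => (d l)⁻¹ with hS
  set Sc := S.map (fun x : ℝ => (x : ℂ)) with hSc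
  set Dc : Matrix (Fin r → Bool) (Fin r → Bool) ℂ :=
    Matrix.diagonal fun l => ((d l : ℝ) : ℂ) with hDc
  set Ec : Matrix (Fin r → Bool) (Fin r → Bool) ℂ :=
    Matrix.diagonal fun l => (((d l)⁻¹ : ℝ) : ℂ) with hEc
  have hmapS : Sc = Dc * Bc * Ec := by
    rw [hSc, hS]
    show ((Matrix.diagonal d * Bmat r t * Matrix.diagonal fun l => (d l)⁻¹).map
      Complex.ofRealHom) = _
    rw [Matrix.map_mul, Matrix.map_mul,
      Matrix.diagonal_map (by simp), Matrix.diagonal_map (by simp)]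
    rfl
  have hDE : Dc * Ec = 1 := by
    rw [hDc, hEc, Matrix.diagonal_mul_diagonal]
    have h9 : (fun l => ((d l : ℝ):ℂ) * (((d l)⁻¹ : ℝ):ℂ)) = fun _ => (1:ℂ) := by
      funext l; rw [← Complex.ofReal_mul, mul_inv_cancel₀ (hd l).ne', Complex.ofReal_one]
    rw [h9, Matrix.diagonal_one]
  have hscal : Dc * Matrix.scalar (Fin r → Bool) z * Ec = Matrix.scalar (Fin r → Bool) z := by
    rw [Matrix.scalar_apply, hDc, hEc, Matrix.diagonal_mul_diagonal,
      Matrix.diagonal_mul_diagonal]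
    have h9 : (fun l => ((d l : ℝ):ℂ) * z * (((d l)⁻¹ : ℝ):ℂ)) = fun _ => z := by
      funext l
      have hne : ((d l : ℝ):ℂ) ≠ 0 := Complex.ofReal_ne_zero.2 (hd l).ne'
      push_cast
      field_simp
    rw [h9]
  have key : Matrix.scalar (Fin r → Bool) z - Sc
      = Dc * (Matrix.scalar (Fin r → Bool) z - Bc) * Ec := by
    rw [Matrix.mul_sub, Matrix.sub_mul, hmapS, hscal]
  have hdetS : (Matrix.scalar (Fin r → Bool) z - Sc).det = 0 := by
    rw [key, Matrix.det_mul, Matrix.det_mul, hdet, mul_zero, zero_mul]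
  have hherm : Sc.IsHermitian := by
    rw [Matrix.IsHermitian]
    ext l l'
    simp only [Matrix.conjTranspose_apply, Matrix.map_apply, hSc]
    rw [Complex.star_def, Complex.conj_ofReal, hsym.apply l l']
  exact herm_root_real Sc hherm hdetS
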